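/- If φ: V(T) → V(T') is an isomorphism of the rooted trees (T,r) and (T',r'), then the compressed descendant labelings satisfy cdl_T(v) = cdl_{T'}(φ(v)) for every vertex v ∈ V(T). -/

import Mathlib

attribute [local instance] Classical.propDecidable

namespace AHU

variable {V : Type*}

/-- The height of the rooted tree `(G, r)`: maximum distance from the root. -/
noncomputable def height (G : SimpleGraph V) [Fintype V] (r : V) : ℕ :=
  Finset.univ.sup fun v => G.dist r v

/-- The level of a vertex: height minus distance from the root. -/
noncomputable def lvl (G : SimpleGraph V) [Fintype V] (r : V) (v : V) : ℕ :=
  height G r - G.dist r v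

/-- `T_i`: the set of vertices at level `i`. -/
noncomputable def levelSet (G : SimpleGraph V) [Fintype V] (r : V) (i : ℕ) : Finset V :=
  Finset.univ.filter fun v => lvl G r v = i

/-- A vertex is a leaf if it has degree at most one. -/
def IsLeaf (G : SimpleGraph V) (v : V) : Prop :=
  {u | G.Adj v u}.ncard ≤ 1

/-- The parent of `v ≠ r`: the unique neighbour of `v` lying closer to the root
(on the unique path from `r` to `v`).  For `v = r` we return `v` itself. -/
noncomputable def parent (G : SimpleGraph V) (r v : V) : V :=
  if h : ∃ p, G.Adj p v ∧ G.dist r p + 1 = G.dist r v then h.choose else v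

/-- The set of children of `u`. -/
noncomputable def children (G : SimpleGraph V) [Fintype V] (r u : V) : Finset V :=
  Finset.univ.filter fun v => v ≠ r ∧ parent G r v = u

/-- The label-compression of a finite set `S` of tuples: the unique order isomorphism
from `(S, ≤lex)` onto `{0, …, |S| - 1}`, i.e. `s ↦ #{t ∈ S | t <lex s}`. -/
noncomputable def compress (S : Finset (List ℕ)) (s : List ℕ) : ℕ :=
  (S.filter fun t => List.Lex (· < ·) t s).card

/-- Auxiliary, level-indexed version of the compressed descendant labeling:
`labelAt G r i v` is the label of a vertex `v` of level `i`. -/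
noncomputable def labelAt (G : SimpleGraph V) [Fintype V] (r : V) : ℕ → V → List ℕ
  | 0, _ => []
  | (i + 1), v =>
      if IsLeaf G v then []
      else
        Multiset.sort
          ((children G r v).val.map fun u =>
            compress ((levelSet G r i).image (labelAt G r i)) (labelAt G r i u)) (· ≤ ·)

/-- The compressed descendant labeling `cdl : V(T) → ℕ*`. -/
noncomputable def cdl (G : SimpleGraph V) [Fintype V] (r : V) (v : V) : List ℕ :=
  labelAt G r (lvl G r v) v

/-- `𝓛(W)`: the multiset of compressed descendant labels of the vertices of `W`. -/
noncomputable def labels (G : SimpleGraph V) [Fintype V] (r : V) (W : Finset V) :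
    Multiset (List ℕ) :=
  W.val.map (cdl G r)

/-- The level-label condition: the multisets of labels agree on every level
`i = 0, 1, …, max(height T, height T')`. -/
noncomputable def LevelLabelCondition {V' : Type*} (G : SimpleGraph V) [Fintype V] (r : V)
    (G' : SimpleGraph V') [Fintype V'] (r' : V') : Prop :=
  ∀ i ≤ max (height G r) (height G' r' ),
    labels G r (levelSet G r i) = labels G' r' (levelSet G' r' i)



section Aux

variable {V' : Type*} {G : SimpleGraph V} {G' : SimpleGraph V'}

lemma dist_map (φ : G ≃g G') (hc : G.Connected) (u v : V) :
    G'.dist (φ u) (φ v) = G.dist u v := by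
  apply le_antisymm
  · obtain ⟨p, hp⟩ := hc.exists_walk_length_eq_dist u v
    calc G'.dist (φ u) (φ v) ≤ (p.map φ.toHom).length := SimpleGraph.dist_le _
    _ = G.dist u v := by rw [SimpleGraph.Walk.length_map, hp]
  · have hr : G'.Reachable (φ u) (φ v) := (hc u v).map φ.toHom
    obtain ⟨q, hq⟩ := hr.exists_walk_length_eq_dist
    have h2 := SimpleGraph.dist_le (q.map φ.symm.toHom)
    rw [SimpleGraph.Walk.length_map, hq] at h2
    simpa using h2

lemma exists_parent (hc : G.Connected) {r v : V} (hv : v ≠ r) :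
    ∃ p, G.Adj p v ∧ G.dist r p + 1 = G.dist r v := by
  have hpos : 0 < G.dist v r := hc.pos_dist_of_ne hv
  obtain ⟨q, hq⟩ := hc.exists_walk_length_eq_dist v r
  cases q with
  | nil => simp [← hq] at hpos
  | cons h q =>
    rename_i w
    refine ⟨w, h.symm, ?_⟩
    have h1 : G.dist r w ≤ q.length := by
      rw [SimpleGraph.dist_comm]; exact SimpleGraph.dist_le q
    have h2 : G.dist r v ≤ G.dist r w + 1 := by
      have ht := hc.dist_triangle (u := r) (v := w) (w := v)
      have : G.dist w v = 1 := SimpleGraph.dist_eq_one_iff_adj.2 h.symm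
      omega
    have h3 : q.length + 1 = G.dist r v := by
      rw [SimpleGraph.dist_comm]; simpa using hq
    omega

lemma parent_unique (hT : G.IsTree) {r v p q : V}
    (hp : G.Adj p v) (hpd : G.dist r p + 1 = G.dist r v)
    (hq : G.Adj q v) (hqd : G.dist r q + 1 = G.dist r v) : p = q := by
  obtain ⟨Wp, hWp⟩ := hT.isConnected.exists_walk_length_eq_dist r p
  obtain ⟨Wq, hWq⟩ := hT.isConnected.exists_walk_length_eq_dist r q
  have hPp : (Wp.concat hp).IsPath :=
    SimpleGraph.Walk.isPath_of_length_eq_dist _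
      (by rw [SimpleGraph.Walk.length_concat, hWp, hpd])
  have hPq : (Wq.concat hq).IsPath :=
    SimpleGraph.Walk.isPath_of_length_eq_dist _
      (by rw [SimpleGraph.Walk.length_concat, hWq, hqd])
  have heq : Wp.concat hp = Wq.concat hq :=
    (hT.existsUnique_path r v).unique hPp hPq
  have := congrArg (fun W : G.Walk r v => W.reverse.getVert 1) heq
  simpa [SimpleGraph.Walk.reverse_concat, SimpleGraph.Walk.getVert_cons_succ] using this

variable [Fintype V] [Fintype V']

lemma parent_spec (hc : G.Connected) {r v : V} (hv : v ≠ r) :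
    G.Adj (parent G r v) v ∧ G.dist r (parent G r v) + 1 = G.dist r v := by
  have h := exists_parent hc hv
  rw [parent, dif_pos h]
  exact h.choose_spec

lemma parent_eq (hT : G.IsTree) {r v p : V} (hv : v ≠ r) (hadj : G.Adj p v)
    (hd : G.dist r p + 1 = G.dist r v) : parent G r v = p := by
  obtain ⟨h1, h2⟩ := parent_spec hT.isConnected hv
  exact parent_unique hT h1 h2 hadj hd

lemma height_map (φ : G ≃g G') (hc : G.Connected) (r : V) :
    height G' (φ r) = height G r := by
  unfold height
  apply le_antisymm
  · refine Finset.sup_le fun v' _ => ?_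
    calc G'.dist (φ r) v' = G.dist r (φ.symm v') := by
          conv_lhs => rw [← φ.apply_symm_apply v']
          exact dist_map φ hc r (φ.symm v')
    _ ≤ _ := Finset.le_sup (Finset.mem_univ _)
  · refine Finset.sup_le fun v _ => ?_
    rw [← dist_map φ hc r v]
    exact Finset.le_sup (f := fun v' => G'.dist (φ r) v') (Finset.mem_univ (φ v))

lemma lvl_map (φ : G ≃g G') (hc : G.Connected) (r v : V) :
    lvl G' (φ r) (φ v) = lvl G r v := by
  unfold lvl
  rw [height_map φ hc, dist_map φ hc]

lemma levelSet_map (φ : G ≃g G') (hc : G.Connected) (r : V) (i : ℕ) :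
    levelSet G' (φ r) i = (levelSet G r i).map φ.toEquiv.toEmbedding := by
  ext v'
  simp only [levelSet, Finset.mem_filter, Finset.mem_univ, true_and, Finset.mem_map,
    Equiv.coe_toEmbedding]
  constructor
  · intro h
    refine ⟨φ.symm v', ?_, φ.apply_symm_apply v'⟩
    rw [← lvl_map φ hc r (φ.symm v'), φ.apply_symm_apply]
    exact h
  · rintro ⟨v, hv, rfl⟩
    show lvl G' (φ r) (φ v) = i
    rw [lvl_map φ hc]
    exact hv

lemma isLeaf_map (φ : G ≃g G') (v : V) : IsLeaf G' (φ v) ↔ IsLeaf G v := by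
  unfold IsLeaf
  have hset : {u' | G'.Adj (φ v) u'} = φ '' {u | G.Adj v u} := by
    ext u'
    simp only [Set.mem_setOf_eq, Set.mem_image]
    constructor
    · intro h
      exact ⟨φ.symm u', by rw [← φ.map_adj_iff, φ.apply_symm_apply]; exact h,
        φ.apply_symm_apply u'⟩
    · rintro ⟨u, hu, rfl⟩
      exact φ.map_adj_iff.2 hu
  rw [hset, Set.ncard_image_of_injective _ φ.injective]

lemma parent_map (φ : G ≃g G') (hT : G.IsTree) (hT' : G'.IsTree) (r : V) {v : V}
    (hv : v ≠ r) : parent G' (φ r) (φ v) = φ (parent G r v) := by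
  obtain ⟨h1, h2⟩ := parent_spec hT.isConnected hv
  refine parent_eq hT' (fun h => hv (φ.injective h)) (φ.map_adj_iff.2 h1) ?_
  rw [dist_map φ hT.isConnected, dist_map φ hT.isConnected]
  exact h2

lemma children_map (φ : G ≃g G') (hT : G.IsTree) (hT' : G'.IsTree) (r v : V) :
    children G' (φ r) (φ v) = (children G r v).map φ.toEquiv.toEmbedding := by
  ext u'
  simp only [children, Finset.mem_filter, Finset.mem_univ, true_and, Finset.mem_map,
    Equiv.coe_toEmbedding]
  constructor
  · rintro ⟨hne, hpar⟩
    have hvne : φ.symm u' ≠ r := by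
      intro h
      apply hne
      rw [← φ.apply_symm_apply u', h]
    refine ⟨φ.symm u', ⟨hvne, ?_⟩, φ.apply_symm_apply u'⟩
    have hpm := parent_map φ hT hT' r hvne
    rw [φ.apply_symm_apply] at hpm
    apply φ.injective
    rw [← hpm, hpar]
  · rintro ⟨u, ⟨hne, hpar⟩, rfl⟩
    refine ⟨fun h => hne (φ.injective h), ?_⟩
    show parent G' (φ r) (φ u) = φ v
    rw [parent_map φ hT hT' r hne, hpar]

lemma labelAt_map (φ : G ≃g G') (hT : G.IsTree) (hT' : G'.IsTree) (r : V) :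
    ∀ i v, labelAt G' (φ r) i (φ v) = labelAt G r i v := by
  intro i
  induction i with
  | zero => intro v; rfl
  | succ i ih =>
    intro v
    rw [labelAt, labelAt]
    by_cases h : IsLeaf G v
    · rw [if_pos h, if_pos ((isLeaf_map φ v).2 h)]
    · rw [if_neg h, if_neg (fun h' => h ((isLeaf_map φ v).1 h'))]
      have hS : (levelSet G' (φ r) i).image (labelAt G' (φ r) i)
          = (levelSet G r i).image (labelAt G r i) := by
        rw [levelSet_map φ hT.isConnected, Finset.map_eq_image, Finset.image_image]
        refine Finset.image_congr fun u _ => ?_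
        exact ih u
      congr 1
      rw [children_map φ hT hT', Finset.map_val, Multiset.map_map]
      refine Multiset.map_congr rfl fun u _ => ?_
      show compress ((levelSet G' (φ r) i).image (labelAt G' (φ r) i)) (labelAt G' (φ r) i (φ u))
        = compress ((levelSet G r i).image (labelAt G r i)) (labelAt G r i u)
      rw [hS, ih u]

end Aux

/-- If `φ` is an isomorphism of the rooted trees `(T, r)` and `(T', r')`, then the
compressed descendant labelings satisfy `cdl_T(v) = cdl_{T'}(φ v)` for every vertex `v`. -/
theorem cdl_eq_of_iso {V V' : Type*} [Fintype V] [Fintype V']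
    (G : SimpleGraph V) (r : V) (G' : SimpleGraph V') (r' : V')
    (hT : G.IsTree) (hT' : G'.IsTree) (φ : G ≃g G') (hroot : φ r = r') :
    ∀ v : V, cdl G r v = cdl G' r' (φ v) := by
  subst hroot
  intro v
  unfold cdl
  rw [lvl_map φ hT.isConnected r v, labelAt_map φ hT hT' r _ v]

end AHU
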